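/- Let η̲ > 0, C > 0, and suppose r : [v₁, v*) → ℝ is continuously differentiable with r > 0, r(v) → 0 as v → v*, and satisfies dr/dv ≥ C̃ + (1/2)χ̃(v) where 0 < C̃ < η̲ and χ̃(v) = χ(v₁)·exp(-∫_{v₁}^v (η/r)(v')dv') with η ≥ η̲ continuous and χ(v₁) < 0. If moreover φ̃ := -χ̃ satisfies φ̃(v) ≥ 2C̃ for all v ∈ [v₁, v*), then r(v) ≤ ((1/2)φ̃(v₁) - C̃)(v* - v) for all v ∈ [v₁, v*), and φ̃(v) ≤ φ̃(v₁)·((v*-v)/(v*-v₁))^{η̲/((1/2)φ̃(v₁)-C̃)}, so φ̃(v) → 0 as v → v*, a contradiction; hence no such r exists. -/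

import Mathlib

open Set Filter Topology

/-- blowup exclusion along C⁺. If r > 0 is C¹ on [v₁, v*), r → 0 at v*,
r' ≥ C̃ + χ̃/2 with χ̃(v) = χ₁·exp(-∫_{v₁}^v η/r), 0 < C̃ < η̲ ≤ η, χ₁ < 0, and
φ̃ = -χ̃ ≥ 2C̃ throughout, then r(v) ≤ (φ̃(v₁)/2 - C̃)(v*-v),
φ̃(v) ≤ φ̃(v₁)((v*-v)/(v*-v₁))^{η̲/(φ̃(v₁)/2 - C̃)} (so φ̃ → 0), a contradiction:
no such r exists. -/
theorem stmt4 (v₁ vStar : ℝ) (hv : v₁ < vStar)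
    (etaL Ct : ℝ) (hCt : 0 < Ct) (hCeta : Ct < etaL)
    (η r : ℝ → ℝ) (hηc : ContinuousOn η (Set.Ico v₁ vStar))
    (hηlb : ∀ v ∈ Set.Ico v₁ vStar, etaL ≤ η v)
    (χ₁ : ℝ) (hχ₁ : χ₁ < 0)
    (chiT : ℝ → ℝ)
    (hchiT : ∀ v : ℝ, chiT v = χ₁ * Real.exp (-∫ v' in v₁..v, η v' / r v'))
    (hrdiff : ∀ v ∈ Set.Ico v₁ vStar, DifferentiableAt ℝ r v)
    (hrderc : ContinuousOn (deriv r) (Set.Ico v₁ vStar))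
    (hrpos : ∀ v ∈ Set.Ico v₁ vStar, 0 < r v)
    (hrlim : Filter.Tendsto r (nhdsWithin vStar (Set.Iio vStar)) (nhds 0))
    (hrineq : ∀ v ∈ Set.Ico v₁ vStar, Ct + chiT v / 2 ≤ deriv r v)
    (hφ : ∀ v ∈ Set.Ico v₁ vStar, 2 * Ct ≤ -chiT v) :
    (∀ v ∈ Set.Ico v₁ vStar, r v ≤ ((-chiT v₁) / 2 - Ct) * (vStar - v)) ∧
    (∀ v ∈ Set.Ico v₁ vStar,
      -chiT v ≤ (-chiT v₁) *
        ((vStar - v) / (vStar - v₁)) ^ (etaL / ((-chiT v₁) / 2 - Ct))) ∧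
    False := by
  have hχ₁' : (0:ℝ) < -χ₁ := by linarith
  have hetaL : (0:ℝ) < etaL := lt_trans hCt hCeta
  have hrc : ContinuousOn r (Set.Ico v₁ vStar) := fun x hx =>
    (hrdiff x hx).continuousAt.continuousWithinAt
  have hrne : ∀ x ∈ Set.Ico v₁ vStar, r x ≠ 0 := fun x hx => (hrpos x hx).ne'
  have hqc : ContinuousOn (fun x => η x / r x) (Set.Ico v₁ vStar) :=
    hηc.div hrc hrne
  have hint : ∀ v ∈ Set.Ico v₁ vStar,
      IntervalIntegrable (fun x => η x / r x) MeasureTheory.volume v₁ v := by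
    intro v hvv
    apply (hqc.mono ?_).intervalIntegrable
    rw [Set.uIcc_of_le hvv.1]
    exact fun x hx => ⟨hx.1, lt_of_le_of_lt hx.2 hvv.2⟩
  have hInonneg : ∀ v ∈ Set.Ico v₁ vStar, 0 ≤ ∫ x in v₁..v, η x / r x := by
    intro v hvv
    apply intervalIntegral.integral_nonneg hvv.1
    intro x hx
    have hx' : x ∈ Set.Ico v₁ vStar := ⟨hx.1, lt_of_le_of_lt hx.2 hvv.2⟩
    exact div_nonneg (le_trans (by linarith) (hηlb x hx')) (hrpos x hx').le
  have hchiTlb : ∀ v ∈ Set.Ico v₁ vStar, χ₁ ≤ chiT v := by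
    intro v hvv
    rw [hchiT v]
    have h1 : Real.exp (-∫ x in v₁..v, η x / r x) ≤ 1 := by
      rw [Real.exp_le_one_iff]
      linarith [hInonneg v hvv]
    nlinarith [Real.exp_pos (-∫ x in v₁..v, η x / r x)]
  -- Claim A with χ₁ in place of chiT v₁
  have hA : ∀ v ∈ Set.Ico v₁ vStar, r v ≤ (-χ₁ / 2 - Ct) * (vStar - v) := by
    intro v hvv
    have key : ∀ w ∈ Set.Ico v₁ vStar, v ≤ w →
        r v ≤ r w - (Ct + χ₁ / 2) * (w - v) := by
      intro w hw hvw
      have hsub : Set.Icc v w ⊆ Set.Ico v₁ vStar := fun x hx =>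
        ⟨le_trans hvv.1 hx.1, lt_of_le_of_lt hx.2 hw.2⟩
      have hderint : IntervalIntegrable (deriv r) MeasureTheory.volume v w := by
        apply ((hrderc.mono hsub).mono ?_).intervalIntegrable
        rw [Set.uIcc_of_le hvw]
      have hftc : ∫ x in v..w, deriv r x = r w - r v := by
        apply intervalIntegral.integral_eq_sub_of_hasDerivAt
        · intro x hx
          rw [Set.uIcc_of_le hvw] at hx
          exact (hrdiff x (hsub hx)).hasDerivAt
        · exact hderint
      have hmono : (Ct + χ₁ / 2) * (w - v) ≤ ∫ x in v..w, deriv r x := by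
        have h0 : ∫ _x in v..w, (Ct + χ₁ / 2) = (Ct + χ₁ / 2) * (w - v) := by
          simp [intervalIntegral.integral_const]; ring
        rw [← h0]
        apply intervalIntegral.integral_mono_on hvw intervalIntegrable_const hderint
        intro x hx
        have hx' := hsub hx
        have := hrineq x hx'
        have := hchiTlb x hx'
        linarith
      linarith [hftc ▸ hmono]
    have hlim : Filter.Tendsto (fun w => r w - (Ct + χ₁ / 2) * (w - v))
        (nhdsWithin vStar (Set.Iio vStar))
        (nhds (0 - (Ct + χ₁ / 2) * (vStar - v))) := by
      apply Filter.Tendsto.sub hrlim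
      apply Filter.Tendsto.mono_left _ nhdsWithin_le_nhds
      exact (continuous_const.mul (continuous_id.sub continuous_const)).tendsto vStar
    have hge : r v ≤ 0 - (Ct + χ₁ / 2) * (vStar - v) := by
      apply ge_of_tendsto hlim
      filter_upwards [Ioo_mem_nhdsLT hvv.2] with w hw
      exact key w ⟨le_trans hvv.1 hw.1.le, hw.2⟩ hw.1.le
    linarith
  have hK : 0 < -χ₁ / 2 - Ct := by
    have h1 := hA v₁ ⟨le_refl _, hv⟩
    have h2 := hrpos v₁ ⟨le_refl _, hv⟩
    nlinarith
  set K : ℝ := -χ₁ / 2 - Ct with hKdef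
  -- choose the witness point
  set L : ℝ := Real.log (-χ₁ / (2 * Ct)) with hLdef
  set A : ℝ := |L| + 1 with hAdef
  have hApos : 0 < A := by positivity
  set δ : ℝ := (vStar - v₁) * Real.exp (-(A * K / etaL)) with hδdef
  have hδpos : 0 < δ := mul_pos (by linarith) (Real.exp_pos _)
  have hδle : δ ≤ vStar - v₁ := by
    have h1 : Real.exp (-(A * K / etaL)) ≤ 1 := by
      rw [Real.exp_le_one_iff]
      have h0 : 0 ≤ A * K / etaL := by
        apply div_nonneg (mul_nonneg hApos.le hK.le) hetaL.le
      linarith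
    nlinarith
  set v : ℝ := vStar - δ with hvdef
  have hvmem : v ∈ Set.Ico v₁ vStar := ⟨by simp only [hvdef]; linarith, by
    simp only [hvdef]; linarith⟩
  have hlogδ : Real.log δ = Real.log (vStar - v₁) - A * K / etaL := by
    rw [hδdef, Real.log_mul (by linarith) (Real.exp_ne_zero _), Real.log_exp]
    ring
  -- lower bound for the integral at v
  have hIlb : etaL / K * (Real.log (vStar - v₁) - Real.log (vStar - v)) ≤
      ∫ x in v₁..v, η x / r x := by
    have hlow : ∀ x ∈ Set.Icc v₁ v, vStar - x ≠ 0 := by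
      intro x hx
      have : x < vStar := lt_of_le_of_lt hx.2 hvmem.2
      linarith
    have hcontlow : ContinuousOn (fun x => etaL / (K * (vStar - x))) (Set.Icc v₁ v) := by
      apply ContinuousOn.div continuousOn_const
      · exact (continuous_const.mul (continuous_const.sub continuous_id)).continuousOn
      · intro x hx
        exact mul_ne_zero hK.ne' (hlow x hx)
    have hintlow : IntervalIntegrable (fun x => etaL / (K * (vStar - x)))
        MeasureTheory.volume v₁ v := by
      apply ContinuousOn.intervalIntegrable
      rwa [Set.uIcc_of_le hvmem.1]
    have hmono : ∫ x in v₁..v, etaL / (K * (vStar - x)) ≤ ∫ x in v₁..v, η x / r x := by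
      apply intervalIntegral.integral_mono_on hvmem.1 hintlow (hint v hvmem)
      intro x hx
      have hx' : x ∈ Set.Ico v₁ vStar := ⟨hx.1, lt_of_le_of_lt hx.2 hvmem.2⟩
      have hxK : r x ≤ K * (vStar - x) := hA x hx'
      have hxpos : 0 < vStar - x := by
        have := hvmem.2; have := hx.2; simp only [hvdef] at *; linarith
      exact div_le_div₀ (le_trans hetaL.le (hηlb x hx')) (hηlb x hx') (hrpos x hx') hxK
    have hcomp : ∫ x in v₁..v, etaL / (K * (vStar - x)) =
        etaL / K * (Real.log (vStar - v₁) - Real.log (vStar - v)) := by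
      have hds : ∀ x ∈ Set.uIcc v₁ v, HasDerivAt
          (fun y => -(etaL / K) * Real.log (vStar - y)) (etaL / (K * (vStar - x))) x := by
        intro x hx
        rw [Set.uIcc_of_le hvmem.1] at hx
        have hxpos : 0 < vStar - x := by
          have := hx.2; simp only [hvdef] at *; linarith
        have h1 : HasDerivAt (fun y : ℝ => vStar - y) (-1) x :=
          (hasDerivAt_id x).const_sub vStar
        have h2 : HasDerivAt (fun y : ℝ => Real.log (vStar - y))
            ((vStar - x)⁻¹ * (-1)) x :=
          (Real.hasDerivAt_log hxpos.ne').comp x h1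
        have h3 := h2.const_mul (-(etaL / K))
        refine h3.congr_deriv ?_
        rw [mul_comm K, ← div_div]
        ring
      have hftc := intervalIntegral.integral_eq_sub_of_hasDerivAt hds hintlow
      rw [hftc]
      ring
    linarith [hcomp ▸ hmono]
  have hIA : A ≤ ∫ x in v₁..v, η x / r x := by
    have h1 : vStar - v = δ := by simp [hvdef]
    rw [h1, hlogδ] at hIlb
    have h2 : etaL / K * (Real.log (vStar - v₁) -
        (Real.log (vStar - v₁) - A * K / etaL)) = A := by
      field_simp
      ring
    linarith [h2 ▸ hIlb]
  -- final contradiction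
  have hexpL : Real.exp (-L) = 2 * Ct / (-χ₁) := by
    rw [show -L = Real.log (2 * Ct / (-χ₁)) by
      rw [hLdef, ← Real.log_inv, inv_div]]
    exact Real.exp_log (div_pos (by linarith) hχ₁')
  have hLA : L < A := by
    have := le_abs_self L
    rw [hAdef]; linarith
  have hstrict : Real.exp (-(∫ x in v₁..v, η x / r x)) < Real.exp (-L) :=
    Real.exp_lt_exp.mpr (by linarith)
  have hfin : -chiT v < 2 * Ct := by
    rw [hchiT v]
    have h1 := mul_lt_mul_of_pos_left hstrict hχ₁'
    rw [hexpL] at h1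
    have h2 : -χ₁ * (2 * Ct / (-χ₁)) = 2 * Ct := by
      rw [mul_comm]; exact div_mul_cancel₀ (2 * Ct) hχ₁'.ne'
    nlinarith [h1, h2]
  exact absurd (hφ v hvmem) (not_le.mpr hfin)
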